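/- Let C > 0, let q ≥ 1 be a natural number, let ε > 0, and let h : ℝ → ℝ be analytic on (−ε, ε). Suppose {x_k} is a sequence of reals with x_k > 0 and x_k < ε for all k, x_k → 0, and x_{k+1}(1 + C x_{k+1}^q + x_{k+1}^{q+1} h(x_{k+1})) = x_k for all k = 0, 1, 2, …. Then lim_{k→∞} (qC)^{1/q} k^{1/q} x_k = 1. -/

import Mathlib

open Filter

theorem stmt1 (C : ℝ) (hC : 0 < C) (q : ℕ) (hq : 1 ≤ q) (ε : ℝ) (hε : 0 < ε)
    (h : ℝ → ℝ) (hh : ∀ t ∈ Set.Ioo (-ε) ε, AnalyticAt ℝ h t)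
    (x : ℕ → ℝ) (hpos : ∀ k, 0 < x k) (hlt : ∀ k, x k < ε)
    (hlim : Tendsto x atTop (nhds 0))
    (hrec : ∀ k, x (k + 1) * (1 + C * x (k + 1) ^ q + x (k + 1) ^ (q + 1) * h (x (k + 1))) = x k) :
    Tendsto (fun k : ℕ => ((q : ℝ) * C) ^ ((1 : ℝ) / q) * (k : ℝ) ^ ((1 : ℝ) / q) * x k)
      atTop (nhds 1) := by
  have hq0 : (q : ℝ) ≠ 0 := by
    have : (1 : ℝ) ≤ (q : ℝ) := by exact_mod_cast hq
    linarith
  have hqpos : (0 : ℝ) < q := by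
    have : (1 : ℝ) ≤ (q : ℝ) := by exact_mod_cast hq
    linarith
  set t : ℕ → ℝ := fun k => x (k + 1) with ht_def
  have htpos : ∀ k, 0 < t k := fun k => hpos (k + 1)
  have ht0 : Tendsto t atTop (nhds 0) := hlim.comp (tendsto_add_atTop_nat 1)
  have hcont : ContinuousAt h 0 := (hh 0 ⟨by linarith, hε⟩).continuousAt
  set B : ℕ → ℝ := fun k => C + t k * h (t k) with hB_def
  have hBlim : Tendsto B atTop (nhds C) := by
    have h1 : Tendsto (fun k => t k * h (t k)) atTop (nhds 0) := by
      have := ht0.mul (hcont.tendsto.comp ht0)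
      simpa using this
    have := (tendsto_const_nhds (x := C) (f := atTop)).add h1
    simpa using this
  have hBpos : ∀ᶠ k in atTop, 0 < B k := hBlim.eventually (eventually_gt_nhds hC)
  set s : ℕ → ℝ := fun k => t k ^ q * B k with hs_def
  have hs0 : Tendsto s atTop (nhds 0) := by
    have := (ht0.pow q).mul hBlim
    simpa [zero_pow (Nat.one_le_iff_ne_zero.mp hq)] using this
  have hspos : ∀ᶠ k in atTop, 0 < s k :=
    hBpos.mono fun k hk => mul_pos (pow_pos (htpos k) q) hk
  -- derivative of z ↦ ((1+z)^q)⁻¹ at 0 is -q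
  have hderiv : HasDerivAt (fun z : ℝ => ((1 + z) ^ q)⁻¹) (-(q : ℝ)) 0 := by
    have h1 : HasDerivAt (fun z : ℝ => (1 + z) ^ q)
        ((q : ℕ) * (1 + (0 : ℝ)) ^ (q - 1) * 1) 0 :=
      (HasDerivAt.const_add 1 (hasDerivAt_id 0)).pow q
    have h2 := h1.inv (by norm_num)
    exact h2.congr_deriv (by simp)
  have hslope : Tendsto (fun k => slope (fun z : ℝ => ((1 + z) ^ q)⁻¹) 0 (s k)) atTop
      (nhds (-(q : ℝ))) := by
    have h3 := hasDerivAt_iff_tendsto_slope.mp hderiv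
    exact h3.comp (tendsto_nhdsWithin_iff.mpr
      ⟨hs0, hspos.mono fun k hk => by simpa using hk.ne'⟩)
  set y : ℕ → ℝ := fun k => ((x k) ^ q)⁻¹ with hy_def
  have hu : ∀ᶠ k in atTop,
      B k * (-(slope (fun z : ℝ => ((1 + z) ^ q)⁻¹) 0 (s k))) = y (k + 1) - y k := by
    filter_upwards [hspos, hBpos] with k hks hkB
    have hxk : x k = t k * (1 + s k) := by
      rw [← hrec k]
      simp only [hs_def, hB_def, ht_def]
      ring
    have htne : t k ^ q ≠ 0 := (pow_pos (htpos k) q).ne'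
    have hsne : s k ≠ 0 := hks.ne'
    have hBne : B k ≠ 0 := hkB.ne'
    have hAne : (1 + s k) ^ q ≠ 0 := (pow_pos (by linarith) q).ne'
    have hxt : x (k + 1) = t k := rfl
    have hsB : s k = t k ^ q * B k := rfl
    simp only [hy_def, slope_def_field, hxk, mul_pow, mul_inv, hxt]
    field_simp
    rw [hsB]
    ring
  have hulim : Tendsto (fun k => y (k + 1) - y k) atTop (nhds ((q : ℝ) * C)) := by
    have h4 : Tendsto (fun k => B k * (-(slope (fun z : ℝ => ((1 + z) ^ q)⁻¹) 0 (s k))))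
        atTop (nhds ((q : ℝ) * C)) := by
      have := hBlim.mul hslope.neg
      simpa [mul_comm] using this
    exact h4.congr' hu
  have hces := hulim.cesaro
  have hyk : Tendsto (fun n : ℕ => (n : ℝ)⁻¹ * y n) atTop (nhds ((q : ℝ) * C)) := by
    have h5 : Tendsto (fun n : ℕ => (n : ℝ)⁻¹ * (y n - y 0)) atTop (nhds ((q : ℝ) * C)) := by
      refine hces.congr fun n => ?_
      rw [Finset.sum_range_sub]
    have h6 : Tendsto (fun n : ℕ => (n : ℝ)⁻¹ * y 0) atTop (nhds 0) := by
      have := tendsto_inv_atTop_nhds_zero_nat.mul_const (y 0)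
      simpa using this
    have := h5.add h6
    simpa [mul_sub] using this
  have hqC0 : ((q : ℝ) * C) ≠ 0 := by positivity
  have hw : Tendsto (fun n : ℕ => ((q : ℝ) * C) / ((n : ℝ)⁻¹ * y n)) atTop (nhds 1) := by
    have := (tendsto_const_nhds (x := (q : ℝ) * C) (f := atTop)).div hyk hqC0
    rwa [div_self hqC0] at this
  have hfin := hw.rpow_const (p := (1 : ℝ) / q) (Or.inr (by positivity))
  rw [Real.one_rpow] at hfin
  refine hfin.congr' ?_
  filter_upwards [eventually_gt_atTop 0] with n hn
  have hn0 : (n : ℝ) ≠ 0 := Nat.cast_ne_zero.mpr hn.ne'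
  have hxq : (0 : ℝ) < x n ^ q := pow_pos (hpos n) q
  have hinner : ((q : ℝ) * C) / ((n : ℝ)⁻¹ * y n) = ((q : ℝ) * C) * ((n : ℝ) * x n ^ q) := by
    simp only [hy_def]
    field_simp
  rw [hinner, Real.mul_rpow (by positivity) (by positivity),
    Real.mul_rpow (by positivity) (le_of_lt hxq)]
  have hxpow : (x n ^ q) ^ ((1 : ℝ) / q) = x n := by
    rw [← Real.rpow_natCast (x n) q, ← Real.rpow_mul (hpos n).le]
    rw [mul_one_div, div_self hq0, Real.rpow_one]
  rw [hxpow]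
  ring
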